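/- Under ignorability, if the propensity score satisfies 0 < e(X) < 1 almost surely and the random variable (1−A)·Y/(1−e(X)) is integrable, then E[(1−A)·Y/(1−e(X))] = E[Y₀]. -/

import Mathlib

open MeasureTheory ProbabilityTheory Real
open scoped ENNReal

theorem ipw_control_arm_unbiased_aux {Ω : Type*} {m mY m₂ : MeasurableSpace Ω}
    [mΩ : MeasurableSpace Ω] [StandardBorelSpace Ω]
    (μ : Measure Ω) [IsProbabilityMeasure μ]
    (hm : m ≤ mΩ)
    (A : Ω → ℝ) (hA : Measurable A) (hA01 : ∀ ω, A ω = 0 ∨ A ω = 1)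
    (Y₀ Y₁ : Ω → ℝ) (hY₀meas : Measurable Y₀) (hY₁meas : Measurable Y₁)
    (hY₀ : Integrable Y₀ μ)
    (Y : Ω → ℝ) (hY : Y = fun ω => A ω * Y₁ ω + (1 - A ω) * Y₀ ω)
    (hign : CondIndepFun m hm (fun ω => (Y₀ ω, Y₁ ω)) A μ)
    (hmYdef : mY = MeasurableSpace.comap (fun ω => (Y₀ ω, Y₁ ω)) inferInstance)
    (hm2def : m₂ = m ⊔ mY)
    (e : Ω → ℝ) (he : e = μ[A|m])
    (he01 : ∀ᵐ ω ∂μ, 0 < e ω ∧ e ω < 1)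
    (hint : Integrable (fun ω => (1 - A ω) * Y ω / (1 - e ω)) μ) :
    ∫ ω, (1 - A ω) * Y ω / (1 - e ω) ∂μ = ∫ ω, Y₀ ω ∂μ := by
  classical
  set W : Ω → ℝ × ℝ := fun ω => (Y₀ ω, Y₁ ω) with hW_def
  have hWmeas : Measurable W := hY₀meas.prodMk hY₁meas
  have hmY : mY ≤ mΩ := hmYdef ▸ hWmeas.comap_le
  have hm₂ : m₂ ≤ mΩ := hm2def ▸ sup_le hm hmY
  have hm_le : m ≤ m₂ := hm2def ▸ le_sup_left
  have hmY_le : mY ≤ m₂ := hm2def ▸ le_sup_right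
  haveI : SigmaFinite (μ.trim hm₂) := by infer_instance
  haveI : SigmaFinite (μ.trim hm) := by infer_instance
  -- the control set
  set T : Set Ω := A ⁻¹' {0} with hT_def
  have hT : MeasurableSet T := hA (measurableSet_singleton 0)
  set oneT : Ω → ℝ := T.indicator (fun _ => (1 : ℝ)) with honeT_def
  have honeT : ∀ ω, oneT ω = 1 - A ω := by
    intro ω
    rcases hA01 ω with h | h
    · simp [honeT_def, Set.indicator_apply, hT_def, Set.mem_preimage, h]
    · simp [honeT_def, Set.indicator_apply, hT_def, Set.mem_preimage, h]
  have hInt_oneT : Integrable oneT μ := (integrable_const (1 : ℝ)).indicator hT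
  have hA_int : Integrable A μ := by
    refine (integrable_const (1 : ℝ)).mono' hA.aestronglyMeasurable ?_
    filter_upwards with ω
    rcases hA01 ω with h | h <;> simp [h]
  have hInt_e : Integrable e μ := he ▸ integrable_condExp
  have he_sm : StronglyMeasurable[m] e := he ▸ stronglyMeasurable_condExp
  have h1e_sm : StronglyMeasurable[m] (fun ω => 1 - e ω) :=
    stronglyMeasurable_const.sub he_sm
  have hInt_1e : Integrable (fun ω => 1 - e ω) μ := (integrable_const (1 : ℝ)).sub hInt_e
  have h1e_bound : ∀ᵐ ω ∂μ, ‖1 - e ω‖ ≤ 1 := by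
    filter_upwards [he01] with ω hω
    rw [Real.norm_eq_abs, abs_le]
    constructor <;> nlinarith [hω.1, hω.2]
  -- conditional expectation of `oneT` given `m` is `1 - e`
  have he_cond : μ[oneT|m] =ᵐ[μ] fun ω => 1 - e ω := by
    have h1 : oneT = (fun _ => (1 : ℝ)) - A := by
      funext ω; simp [honeT ω]
    have h2 : μ[oneT|m] =ᵐ[μ] μ[(fun _ => (1 : ℝ))|m] - μ[A|m] := by
      rw [h1]
      exact condExp_sub (integrable_const 1) hA_int m
    refine h2.trans ?_
    rw [condExp_const hm]
    filter_upwards with ω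
    simp [he]
  -- conditional independence: product identity for indicators
  have hsets : ∀ G₂ : Set Ω, MeasurableSet[mY] G₂ →
      μ[(G₂ ∩ T).indicator (fun _ => (1 : ℝ))|m] =ᵐ[μ]
        fun ω => (μ[G₂.indicator (fun _ => (1 : ℝ))|m]) ω * (μ[oneT|m]) ω := by
    intro G₂ hG₂
    rw [hmYdef] at hG₂
    obtain ⟨s, hs, rfl⟩ := hG₂
    have := (condIndepFun_iff_condExp_inter_preimage_eq_mul (hm' := hm)
      (μ := μ) hWmeas hA).mp hign s {0} hs (measurableSet_singleton 0)
    exact this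
  -- key: conditional expectation of `oneT` given the larger σ-algebra `m₂` is still `1 - e`
  have hK : (fun ω => 1 - e ω) =ᵐ[μ] μ[oneT|m₂] := by
    refine ae_eq_condExp_of_forall_setIntegral_eq hm₂ hInt_oneT
      (fun s _ _ => hInt_1e.integrableOn) ?_ ?_
    swap
    · exact (h1e_sm.mono hm_le).aestronglyMeasurable
    intro G hG _
    -- π-system argument
    set C : Set (Set Ω) := {G | ∃ G₁ G₂ : Set Ω, MeasurableSet[m] G₁ ∧
      MeasurableSet[mY] G₂ ∧ G = G₁ ∩ G₂} with hC_def
    have h_eq : m₂ = MeasurableSpace.generateFrom C := by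
      rw [hm2def]
      refine le_antisymm ?_ ?_
      · refine sup_le (fun t ht => ?_) (fun t ht => ?_)
        · exact MeasurableSpace.measurableSet_generateFrom
            ⟨t, Set.univ, ht, MeasurableSet.univ, (Set.inter_univ t).symm⟩
        · exact MeasurableSpace.measurableSet_generateFrom
            ⟨Set.univ, t, MeasurableSet.univ, ht, (Set.univ_inter t).symm⟩
      · refine MeasurableSpace.generateFrom_le ?_
        rintro t ⟨G₁, G₂, h1, h2, rfl⟩
        exact MeasurableSet.inter ((le_sup_left : m ≤ m ⊔ mY) _ h1)
          ((le_sup_right : mY ≤ m ⊔ mY) _ h2)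
    have h_pi : IsPiSystem C := by
      rintro t ⟨G₁, G₂, h1, h2, rfl⟩ t' ⟨G₁', G₂', h1', h2', rfl⟩ -
      exact ⟨G₁ ∩ G₁', G₂ ∩ G₂', h1.inter h1', h2.inter h2',
        Set.inter_inter_inter_comm G₁ G₂ G₁' G₂'⟩
    have huniv : ∫ ω, (1 - e ω) ∂μ = ∫ ω, oneT ω ∂μ := by
      have h1 : ∫ ω, (1 - e ω) ∂μ = 1 - ∫ ω, e ω ∂μ := by
        rw [integral_sub (integrable_const 1) hInt_e]
        simp
      have h2 : ∫ ω, e ω ∂μ = ∫ ω, A ω ∂μ := by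
        rw [he]; exact integral_condExp hm
      have h3 : ∫ ω, oneT ω ∂μ = 1 - ∫ ω, A ω ∂μ := by
        calc ∫ ω, oneT ω ∂μ = ∫ ω, (1 - A ω) ∂μ :=
              integral_congr_ae (Filter.Eventually.of_forall honeT)
          _ = 1 - ∫ ω, A ω ∂μ := by
              rw [integral_sub (integrable_const 1) hA_int]; simp
      rw [h1, h2, h3]
    -- the main computation on the π-system
    have h_basic : ∀ t ∈ C, ∫ ω in t, (1 - e ω) ∂μ = ∫ ω in t, oneT ω ∂μ := by
      rintro t ⟨G₁, G₂, hG₁, hG₂, rfl⟩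
      have hG₂' : MeasurableSet G₂ := hmY _ hG₂
      have hG₁' : MeasurableSet G₁ := hm _ hG₁
      have hIndG₂ : Integrable (G₂.indicator (fun _ => (1 : ℝ))) μ :=
        (integrable_const (1 : ℝ)).indicator hG₂'
      have hφ_eq : G₂.indicator (fun ω => 1 - e ω)
          = fun ω => (1 - e ω) * G₂.indicator (fun _ => (1 : ℝ)) ω := by
        funext ω
        by_cases hω : ω ∈ G₂ <;> simp [Set.indicator_apply, hω]
      have hφ_int : Integrable (fun ω => (1 - e ω) * G₂.indicator (fun _ => (1 : ℝ)) ω) μ :=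
        hIndG₂.bdd_mul (h1e_sm.mono hm).aestronglyMeasurable h1e_bound
      have hpull : μ[fun ω => (1 - e ω) * G₂.indicator (fun _ => (1 : ℝ)) ω|m] =ᵐ[μ]
          fun ω => (1 - e ω) * (μ[G₂.indicator (fun _ => (1 : ℝ))|m]) ω := by
        have := condExp_stronglyMeasurable_mul_of_bound hm h1e_sm hIndG₂ 1 h1e_bound
        filter_upwards [this] with ω hω
        exact hω
      have hstep : (fun ω => (1 - e ω) * (μ[G₂.indicator (fun _ => (1 : ℝ))|m]) ω) =ᵐ[μ]
          μ[(G₂ ∩ T).indicator (fun _ => (1 : ℝ))|m] := by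
        filter_upwards [hsets G₂ hG₂, he_cond] with ω h1 h2
        rw [h1, h2, mul_comm]
      calc ∫ ω in G₁ ∩ G₂, (1 - e ω) ∂μ
          = ∫ ω in G₁, G₂.indicator (fun ω => 1 - e ω) ω ∂μ :=
            (setIntegral_indicator hG₂').symm
        _ = ∫ ω in G₁, (1 - e ω) * G₂.indicator (fun _ => (1 : ℝ)) ω ∂μ := by
            rw [hφ_eq]
        _ = ∫ ω in G₁, (μ[fun ω => (1 - e ω) * G₂.indicator (fun _ => (1 : ℝ)) ω|m]) ω ∂μ :=
            (setIntegral_condExp hm hφ_int hG₁).symm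
        _ = ∫ ω in G₁, (μ[(G₂ ∩ T).indicator (fun _ => (1 : ℝ))|m]) ω ∂μ :=
            integral_congr_ae (ae_restrict_of_ae (hpull.trans hstep))
        _ = ∫ ω in G₁, (G₂ ∩ T).indicator (fun _ => (1 : ℝ)) ω ∂μ :=
            setIntegral_condExp hm ((integrable_const (1 : ℝ)).indicator (hG₂'.inter hT)) hG₁
        _ = ∫ ω in G₁ ∩ (G₂ ∩ T), (1 : ℝ) ∂μ := setIntegral_indicator (hG₂'.inter hT)
        _ = ∫ ω in (G₁ ∩ G₂) ∩ T, (1 : ℝ) ∂μ := by rw [Set.inter_assoc]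
        _ = ∫ ω in G₁ ∩ G₂, T.indicator (fun _ => (1 : ℝ)) ω ∂μ :=
            (setIntegral_indicator hT).symm
        _ = ∫ ω in G₁ ∩ G₂, oneT ω ∂μ := rfl
    revert hG
    have h_main := MeasurableSpace.induction_on_inter (m := m₂)
      (C := fun t _ => ∫ ω in t, (1 - e ω) ∂μ = ∫ ω in t, oneT ω ∂μ) h_eq h_pi
      (by simp) h_basic ?_ ?_ (t := G)
    · exact fun hG => h_main hG
    · intro t ht hC
      have ht' : MeasurableSet t := hm₂ _ ht
      have e1 := integral_add_compl ht' hInt_1e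
      have e2 := integral_add_compl ht' hInt_oneT
      have := huniv
      linarith
    · intro f hdisj hfm hCf
      have hfm' : ∀ i, MeasurableSet (f i) := fun i => hm₂ _ (hfm i)
      have H1 : HasSum (fun i => ∫ ω in f i, (1 - e ω) ∂μ) (∫ ω in ⋃ i, f i, (1 - e ω) ∂μ) :=
        hasSum_integral_iUnion hfm' hdisj hInt_1e.integrableOn
      have H2 : HasSum (fun i => ∫ ω in f i, oneT ω ∂μ) (∫ ω in ⋃ i, f i, oneT ω ∂μ) :=
        hasSum_integral_iUnion hfm' hdisj hInt_oneT.integrableOn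
      have hfun : (fun i => ∫ ω in f i, (1 - e ω) ∂μ) = fun i => ∫ ω in f i, oneT ω ∂μ :=
        funext fun i => hCf i
      rw [hfun] at H1
      exact H1.unique H2
  -- assemble everything
  set r : Ω → ℝ := fun ω => (1 - e ω)⁻¹ * Y₀ ω with hr_def
  have hW_mY : Measurable[mY] W := by
    rw [hmYdef]; exact fun s hs => ⟨s, hs, rfl⟩
  have hY₀_m2 : Measurable[m₂] Y₀ :=
    ((measurable_fst.comp hW_mY).mono hmY_le le_rfl)
  have hr_meas : Measurable[m₂] r := by
    refine Measurable.mul ?_ hY₀_m2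
    exact ((h1e_sm.measurable.mono hm_le le_rfl)).inv
  have hr_sm : StronglyMeasurable[m₂] r := hr_meas.stronglyMeasurable
  have hP : (fun ω => (1 - A ω) * Y ω / (1 - e ω)) = fun ω => r ω * oneT ω := by
    funext ω
    rcases hA01 ω with h | h
    · have hmem : ω ∈ T := by simp [hT_def, Set.mem_preimage, h]
      simp only [hY, h, hr_def, honeT_def, Set.indicator_of_mem hmem]
      rw [div_eq_mul_inv]; ring
    · have hmem : ω ∉ T := by simp [hT_def, Set.mem_preimage, h]
      simp [hY, h, hr_def, honeT_def, Set.indicator_of_notMem hmem]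
  have h_int2 : Integrable (fun ω => r ω * oneT ω) μ := hP ▸ hint
  have h_int2' : Integrable (r * oneT) μ := h_int2
  rw [hP]
  calc ∫ ω, r ω * oneT ω ∂μ
      = ∫ ω, (μ[r * oneT|m₂]) ω ∂μ := (integral_condExp hm₂).symm
    _ = ∫ ω, Y₀ ω ∂μ := by
        refine integral_congr_ae ?_
        have h1 : μ[r * oneT|m₂] =ᵐ[μ] r * μ[oneT|m₂] :=
          condExp_mul_of_stronglyMeasurable_left hr_sm h_int2' hInt_oneT
        refine h1.trans ?_
        filter_upwards [hK, he01] with ω hKω hω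
        have hne : 1 - e ω ≠ 0 := by
          have := hω.2; intro hc; nlinarith
        simp only [Pi.mul_apply, hr_def, ← hKω]
        field_simp

/-- Under ignorability, if the propensity score satisfies `0 < e(X) < 1` almost surely and
`(1−A)·Y/(1−e(X))` is integrable, then `E[(1−A)·Y/(1−e(X))] = E[Y₀]`. -/
theorem ipw_control_arm_unbiased
    {Ω : Type*} [MeasurableSpace Ω] [StandardBorelSpace Ω] [Nonempty Ω]
    (μ : Measure Ω) [IsProbabilityMeasure μ] {d : ℕ}
    (X : Ω → (Fin d → ℝ)) (hX : Measurable X)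
    (A : Ω → ℝ) (hA : Measurable A) (hA01 : ∀ ω, A ω = 0 ∨ A ω = 1)
    (Y₀ Y₁ : Ω → ℝ) (hY₀meas : Measurable Y₀) (hY₁meas : Measurable Y₁)
    (hY₀ : Integrable Y₀ μ) (hY₁ : Integrable Y₁ μ)
    (Y : Ω → ℝ) (hY : Y = fun ω => A ω * Y₁ ω + (1 - A ω) * Y₀ ω)
    (hign : CondIndepFun (MeasurableSpace.comap X inferInstance) hX.comap_le
      (fun ω => (Y₀ ω, Y₁ ω)) A μ)
    (e : Ω → ℝ) (he : e = μ[A | MeasurableSpace.comap X inferInstance])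
    (he01 : ∀ᵐ ω ∂μ, 0 < e ω ∧ e ω < 1)
    (hint : Integrable (fun ω => (1 - A ω) * Y ω / (1 - e ω)) μ) :
    ∫ ω, (1 - A ω) * Y ω / (1 - e ω) ∂μ = ∫ ω, Y₀ ω ∂μ :=
  ipw_control_arm_unbiased_aux μ hX.comap_le A hA hA01 Y₀ Y₁ hY₀meas hY₁meas hY₀
    Y hY hign rfl rfl e he he01 hint
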